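/- Let m, n, s be nonnegative integers and let β > 0. If m + n + s is even, then ∫_{-∞}^{∞} x^{s} e^{-βx²} H_m(x) H_n(x) dx = 2^{m+n} β^{-(m+n+s+1)/2} Σ_{k=0}^{min(m,n)} C(m,k) C(n,k) k! (β/2)^k Γ(1/2 − k + (m+n+s)/2) · ₂F₁(k − (m+n)/2, 1/2 + k − (m+n)/2; 1/2 + k − (m+n+s)/2; β). If m + n + s is odd, then ∫_{-∞}^{∞} x^{s} e^{-βx²} H_m(x) H_n(x) dx = 0. -/

import Mathlib

open MeasureTheory Finset Real

/-- Pochhammer symbol `(a)_k = a (a+1) ⋯ (a+k-1)`. -/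
noncomputable def poch (a : ℝ) (k : ℕ) : ℝ := ∏ i ∈ Finset.range k, (a + i)

/-- Generalized binomial coefficient `C(a, j) = (a-j+1)_j / j!`. -/
noncomputable def gbinom (a : ℝ) (j : ℕ) : ℝ := poch (a - j + 1) j / (j.factorial : ℝ)

/-- Generalized Laguerre polynomial `L_n^{(α)}`. -/
noncomputable def Lag (α : ℝ) (n : ℕ) (x : ℝ) : ℝ :=
  ∑ i ∈ Finset.range (n + 1),
    ((-1 : ℝ) ^ i / (i.factorial : ℝ)) * gbinom ((n : ℝ) + α) (n - i) * x ^ i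

/-- Physicists' Hermite polynomial `H_n`. -/
noncomputable def Herm (n : ℕ) (x : ℝ) : ℝ :=
  ∑ k ∈ Finset.range (n / 2 + 1),
    ((-1 : ℝ) ^ k * (n.factorial : ℝ) / ((k.factorial : ℝ) * ((n - 2 * k).factorial : ℝ))) *
      (2 * x) ^ (n - 2 * k)

/-- Jacobi polynomial `P_n^{(α,γ)}`. -/
noncomputable def Jac (α γ : ℝ) (n : ℕ) (x : ℝ) : ℝ :=
  ∑ k ∈ Finset.range (n + 1),
    gbinom ((n : ℝ) + α) (n - k) * gbinom ((n : ℝ) + γ) k *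
      ((x - 1) / 2) ^ k * ((x + 1) / 2) ^ (n - k)

/-- Terminating Lauricella function of type A. -/
noncomputable def lauricellaA {r : ℕ} (a : ℝ) (m : Fin r → ℕ) (c x : Fin r → ℝ) : ℝ :=
  ∑ j ∈ Fintype.piFinset (fun i => Finset.range (m i + 1)),
    poch a (∑ i, j i) *
      ∏ i, (poch (-(m i : ℝ)) (j i) / (poch (c i) (j i) * ((j i).factorial : ℝ)) * x i ^ (j i))

/-- Terminating Gauss hypergeometric sum `₂F₁(-k, b; c; x)`. -/
noncomputable def hyp2F1 (k : ℕ) (b c x : ℝ) : ℝ :=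
  ∑ j ∈ Finset.range (k + 1),
    poch (-(k : ℝ)) j * poch b j / (poch c j * (j.factorial : ℝ)) * x ^ j

/-- Terminating hypergeometric sum `₃F₂(-k, b₁, b₂; c₁, c₂; x)`. -/
noncomputable def hyp3F2 (k : ℕ) (b₁ b₂ c₁ c₂ x : ℝ) : ℝ :=
  ∑ j ∈ Finset.range (k + 1),
    poch (-(k : ℝ)) j * poch b₁ j * poch b₂ j /
      (poch c₁ j * poch c₂ j * (j.factorial : ℝ)) * x ^ j

/-- Gauss hypergeometric series `₂F₁(a, b; c; x)` (a terminating series when `a` or `b`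
is a nonpositive integer). -/
noncomputable def hypSum (a b c x : ℝ) : ℝ :=
  ∑' j : ℕ, poch a j * poch b j / (poch c j * (j.factorial : ℝ)) * x ^ j

/-- Terminating Appell function `F₂(a; -m₁, -m₂; c₁, c₂; x₁, x₂)`. -/
noncomputable def appellF2 (a : ℝ) (m₁ m₂ : ℕ) (c₁ c₂ x₁ x₂ : ℝ) : ℝ :=
  ∑ j₁ ∈ Finset.range (m₁ + 1), ∑ j₂ ∈ Finset.range (m₂ + 1),
    poch a (j₁ + j₂) * poch (-(m₁ : ℝ)) j₁ * poch (-(m₂ : ℝ)) j₂ /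
      (poch c₁ j₁ * poch c₂ j₂ * (j₁.factorial : ℝ) * (j₂.factorial : ℝ)) * x₁ ^ j₁ * x₂ ^ j₂

/-- `1/z!` with the convention that it vanishes for negative integers `z`. -/
noncomputable def invFacZ (z : ℤ) : ℝ := if 0 ≤ z then ((z.toNat.factorial : ℕ) : ℝ)⁻¹ else 0

/-- Pochhammer symbol extended to integer index via `(a)_k = Γ(a+k)/Γ(a)` for negative `k`. -/
noncomputable def pochZ (a : ℝ) (k : ℤ) : ℝ :=
  if 0 ≤ k then poch a k.toNat else Real.Gamma (a + (k : ℝ)) / Real.Gamma a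

section HermiteKreinAux


lemma poch_zero (a : ℝ) : poch a 0 = 1 := by simp [poch]

lemma poch_succ (a : ℝ) (k : ℕ) : poch a (k+1) = poch a k * (a + k) := by
  simp [poch, Finset.prod_range_succ]

lemma poch_succ_left (a : ℝ) (k : ℕ) : poch a (k+1) = a * poch (a+1) k := by
  rw [poch, poch, Finset.prod_range_succ']
  simp only [Nat.cast_zero, add_zero, Nat.cast_add, Nat.cast_one]
  rw [mul_comm]
  congr 1
  exact Finset.prod_congr rfl (fun i _ => by ring)

lemma poch_pos {a : ℝ} (ha : 0 < a) (k : ℕ) : 0 < poch a k := by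
  apply Finset.prod_pos
  intro i _
  positivity

lemma poch_dup (a : ℝ) (t : ℕ) :
    poch a t * poch (a + 1/2) t * 4^t = poch (2*a) (2*t) := by
  induction t with
  | zero => simp [poch_zero]
  | succ t ih =>
      have h2 : 2*(t+1) = (2*t+1)+1 := by ring
      rw [h2, poch_succ, poch_succ, poch_succ, poch_succ]
      push_cast
      linear_combination ((2*a+2*(t:ℝ))*(2*a+2*(t:ℝ)+1)) * ih

lemma poch_neg_nat_mul (N j : ℕ) (h : j ≤ N) :
    poch (-(N:ℝ)) j * ((N-j).factorial : ℝ) = (-1)^j * (N.factorial : ℝ) := by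
  induction j with
  | zero => simp [poch_zero]
  | succ j ih =>
      have hj : j ≤ N := by omega
      have h1 : N - j = (N - (j+1)) + 1 := by omega
      have h2 : ((N - (j+1) : ℕ) : ℝ) = (N:ℝ) - (j:ℝ) - 1 := by
        push_cast [Nat.cast_sub (by omega : j+1 ≤ N)]; ring
      have key := ih hj
      rw [h1, Nat.factorial_succ] at key
      push_cast at key
      rw [poch_succ]
      push_cast
      rw [h2] at key
      linear_combination (-1:ℝ) * key

lemma poch_neg_nat (N j : ℕ) (h : j ≤ N) :
    poch (-(N:ℝ)) j = (-1)^j * (N.factorial : ℝ) / ((N-j).factorial : ℝ) := by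
  have h3 : (0:ℝ) < (N-j).factorial := by positivity
  field_simp
  exact poch_neg_nat_mul N j h

lemma poch_neg_nat_zero (N j : ℕ) (h : N < j) : poch (-(N:ℝ)) j = 0 := by
  apply Finset.prod_eq_zero (Finset.mem_range.mpr h)
  simp

lemma poch_reflect (c : ℝ) (t : ℕ) : poch c t = (-1)^t * poch (-c - t + 1) t := by
  induction t generalizing c with
  | zero => simp [poch_zero]
  | succ t ih =>
      rw [poch_succ_left, poch_succ, ih (c+1)]
      push_cast
      have harg : -(c+1) - (t:ℝ) + 1 = -c - ((t:ℝ)+1) + 1 := by ring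
      rw [harg]
      ring

lemma Gamma_shift (y : ℝ) (hy : 0 < y) (t : ℕ) :
    Real.Gamma (y + t) = poch y t * Real.Gamma y := by
  induction t with
  | zero => simp [poch_zero]
  | succ t ih =>
      push_cast
      rw [show y + ((t:ℝ)+1) = (y+(t:ℝ))+1 from by ring,
        Real.Gamma_add_one (by positivity : (0:ℝ) < y + (t:ℝ)).ne', ih, poch_succ]
      ring

lemma integrable_pow_gauss {β : ℝ} (hβ : 0 < β) (j : ℕ) :
    Integrable (fun x : ℝ => x ^ j * Real.exp (-β * x^2)) := by
  have h := integrable_rpow_mul_exp_neg_mul_sq hβ (s := (j:ℝ)) (by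
    have : (0:ℝ) ≤ j := by positivity
    linarith)
  simpa [Real.rpow_natCast] using h

lemma integral_even_moment {β : ℝ} (hβ : 0 < β) (q : ℕ) :
    ∫ x : ℝ, x^(2*q) * Real.exp (-β * x^2)
      = Real.Gamma ((2*(q:ℝ)+1)/2) * β ^ (-(2*(q:ℝ)+1)/2) := by
  have h := integral_rpow_mul_exp_neg_mul_rpow (p := 2) (q := 2*(q:ℝ))
    two_pos (by
      have h0 : (0:ℝ) ≤ 2*(q:ℝ) := by positivity
      linarith) hβ
  have h2 : ∀ x : ℝ, x ∈ Set.Ioi (0:ℝ) →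
      x ^ (2*(q:ℝ)) * Real.exp (-β * x ^ (2:ℝ)) = x^(2*q) * Real.exp (-β * x^2) := by
    intro x hx
    rw [Real.rpow_two, show (2*(q:ℝ)) = ((2*q : ℕ):ℝ) by push_cast; ring,
      Real.rpow_natCast]
  rw [setIntegral_congr_fun measurableSet_Ioi h2] at h
  have h3 : (fun x : ℝ => x^(2*q) * Real.exp (-β * x^2))
      = fun x : ℝ => |x|^(2*q) * Real.exp (-β * |x|^2) := by
    funext x
    simp [pow_mul, sq_abs]
  rw [h3, integral_comp_abs (f := fun x : ℝ => x^(2*q) * Real.exp (-β * x^2)), h]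
  ring

lemma integral_odd_moment {β : ℝ} (hβ : 0 < β) (q : ℕ) :
    ∫ x : ℝ, x^(2*q+1) * Real.exp (-β * x^2) = 0 := by
  set f : ℝ → ℝ := fun x => x^(2*q+1) * Real.exp (-β * x^2) with hf
  have hint : Integrable f := integrable_pow_gauss hβ (2*q+1)
  have hodd : ∀ x : ℝ, f (-x) = - f x := by
    intro x
    simp only [hf]
    rw [Odd.neg_pow ⟨q, by ring⟩, neg_sq]
    ring
  have h1 : ∫ x in Set.Iic (0:ℝ), f x = - ∫ x in Set.Ioi (0:ℝ), f x := by
    have h2 := integral_comp_neg_Iic (0:ℝ) f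
    rw [neg_zero] at h2
    have h3 : ∫ x in Set.Iic (0:ℝ), f (-x) = - ∫ x in Set.Iic (0:ℝ), f x := by
      rw [← integral_neg]
      exact integral_congr_ae (Filter.Eventually.of_forall (fun x => hodd x))
    linarith [h2, h3]
  have h4 : (∫ x in Set.Iic (0:ℝ), f x) + ∫ x in Set.Ioi (0:ℝ), f x = ∫ x, f x := by
    rw [← Set.compl_Iic]
    exact integral_add_compl measurableSet_Iic hint
  rw [← h4, h1]
  ring


noncomputable def G (n k : ℕ) (x : ℝ) : ℝ :=
  if 2*k ≤ n then
    ((-1 : ℝ) ^ k * (n.factorial : ℝ) / ((k.factorial : ℝ) * ((n - 2 * k).factorial : ℝ))) *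
      (2 * x) ^ (n - 2 * k)
  else 0

lemma Herm_eq_G (n : ℕ) (x : ℝ) : Herm n x = ∑ k ∈ Finset.range (n+1), G n k x := by
  rw [Herm, ← Finset.sum_subset (Finset.range_subset_range.mpr (by omega : n/2+1 ≤ n+1))
    (fun k _ hk => by
      rw [G, if_neg]
      simp only [Finset.mem_range] at hk
      omega)]
  apply Finset.sum_congr rfl
  intro k hk
  simp only [Finset.mem_range] at hk
  rw [G, if_pos (by omega)]

lemma Herm_zero (x : ℝ) : Herm 0 x = 1 := by
  simp [Herm]

lemma Herm_one (x : ℝ) : Herm 1 x = 2*x := by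
  simp [Herm]

lemma G_zero (n : ℕ) (x : ℝ) : G n 0 x = (2*x)^n := by
  simp only [G, Nat.mul_zero, Nat.zero_le, if_true, Nat.sub_zero, pow_zero, Nat.factorial,
    Nat.cast_one, one_mul, pow_zero]
  rw [div_self (by positivity : ((n.factorial : ℕ):ℝ) ≠ 0), one_mul]

lemma G_big (n k : ℕ) (h : n < 2*k) (x : ℝ) : G n k x = 0 := by
  rw [G, if_neg (by omega)]

lemma G_rec (n k : ℕ) (x : ℝ) :
    G (n+2) (k+1) x = 2*x*G (n+1) (k+1) x - 2*((n:ℝ)+1)*G n k x := by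
  rcases (by omega : 2*k+1 ≤ n ∨ 2*k = n ∨ n < 2*k) with h | h | h
  · obtain ⟨d, rfl⟩ : ∃ d, n = 2*k+1+d := ⟨n - (2*k+1), by omega⟩
    rw [G, if_pos (by omega), G, if_pos (by omega), G, if_pos (by omega)]
    rw [show 2*k+1+d+2 - 2*(k+1) = d+1 from by omega,
        show 2*k+1+d+1 - 2*(k+1) = d from by omega,
        show 2*k+1+d - 2*k = d+1 from by omega]
    rw [show 2*k+1+d+2 = (2*k+1+d+1)+1 from by omega, Nat.factorial_succ,
        show 2*k+1+d+1 = (2*k+1+d)+1 from rfl, Nat.factorial_succ,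
        Nat.factorial_succ d, Nat.factorial_succ k, pow_succ (2*x) d, pow_succ (-1:ℝ) k]
    have hk : (0:ℝ) < k.factorial := by positivity
    have hd : (0:ℝ) < d.factorial := by positivity
    field_simp
    push_cast
    ring
  · subst h
    rw [G, if_pos (by omega), G, if_neg (by omega), G, if_pos (by omega)]
    rw [show 2*k+2 - 2*(k+1) = 0 from by omega, show 2*k - 2*k = 0 from by omega]
    rw [show 2*k+2 = (2*k+1)+1 from rfl, Nat.factorial_succ,
        show 2*k+1 = (2*k)+1 from rfl, Nat.factorial_succ,
        Nat.factorial_succ k, pow_succ (-1:ℝ) k]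
    have hk : (0:ℝ) < k.factorial := by positivity
    field_simp
    push_cast
    ring
  · rw [G, if_neg (by omega), G, if_neg (by omega), G, if_neg (by omega)]
    ring

lemma Herm_rec (n : ℕ) (x : ℝ) :
    Herm (n+2) x = 2*x*Herm (n+1) x - 2*((n:ℝ)+1)*Herm n x := by
  rw [Herm_eq_G, Herm_eq_G, Herm_eq_G]
  rw [Finset.sum_range_succ' (fun k => G (n+2) k x) (n+2)]
  have h1 : ∀ k ∈ Finset.range (n+2),
      G (n+2) (k+1) x = 2*x*G (n+1) (k+1) x - 2*((n:ℝ)+1)*G n k x :=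
    fun k _ => G_rec n k x
  rw [Finset.sum_congr rfl h1, Finset.sum_sub_distrib]
  have h2 : ∑ k ∈ Finset.range (n+2), 2*x*G (n+1) (k+1) x
      = 2*x * ∑ k ∈ Finset.range (n+2), G (n+1) (k+1) x := by
    rw [Finset.mul_sum]
  have h3 : ∑ k ∈ Finset.range (n+2), 2*((n:ℝ)+1)*G n k x
      = 2*((n:ℝ)+1) * ∑ k ∈ Finset.range (n+2), G n k x := by
    rw [Finset.mul_sum]
  rw [h2, h3]
  have h6 : ∑ k ∈ Finset.range (n+3), G (n+1) k x
      = ∑ k ∈ Finset.range (n+2), G (n+1) k x := by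
    rw [Finset.sum_range_succ, G_big (n+1) (n+2) (by omega), add_zero]
  have h4 : ∑ k ∈ Finset.range (n+2), G (n+1) (k+1) x
      = (∑ k ∈ Finset.range (n+2), G (n+1) k x) - G (n+1) 0 x := by
    have h := Finset.sum_range_succ' (fun k => G (n+1) k x) (n+2)
    rw [show n+2+1 = n+3 from rfl] at h
    rw [h6] at h
    linarith
  have h5 : ∑ k ∈ Finset.range (n+2), G n k x
      = ∑ k ∈ Finset.range (n+1), G n k x := by
    rw [Finset.sum_range_succ, G_big n (n+1) (by omega), add_zero]
  rw [h4, h5, G_zero, G_zero]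
  ring

lemma Herm_mulX (N : ℕ) (x : ℝ) :
    2*x*Herm N x = Herm (N+1) x + 2*(N:ℝ)*Herm (N-1) x := by
  cases N with
  | zero => simp [Herm_zero, Herm_one]
  | succ M =>
      have := Herm_rec M x
      rw [show M+1-1 = M from by omega]
      push_cast
      linarith [this]

noncomputable def LC (m n k : ℕ) : ℝ :=
  2^k * (k.factorial : ℝ) * (m.choose k : ℝ) * (n.choose k : ℝ)

lemma choose_succ_real (m k : ℕ) :
    ((k:ℝ)+1) * (m.choose (k+1) : ℝ) = ((m:ℝ) - k) * (m.choose k : ℝ) := by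
  rcases le_or_gt (k+1) m with h | h
  · have hc : ((m.choose (k+1) * (k+1) : ℕ) : ℝ) = ((m.choose k * (m - k) : ℕ) : ℝ) :=
      congrArg (Nat.cast (R := ℝ)) (Nat.choose_succ_right_eq m k)
    push_cast [Nat.cast_sub (by omega : k ≤ m)] at hc
    linarith
  · rcases (by omega : m = k ∨ m < k) with h2 | h2
    · subst h2
      simp [Nat.choose_succ_self]
    · rw [Nat.choose_eq_zero_of_lt h2, Nat.choose_eq_zero_of_lt (by omega)]
      ring

lemma choose_shift_real (n k : ℕ) :
    ((n:ℝ)+1) * (n.choose k : ℝ) = ((n:ℝ)+1-(k:ℝ)) * ((n+1).choose k : ℝ) := by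
  rcases le_or_gt k (n+1) with h | h
  · have hc : ((n.choose k * (n + 1) : ℕ) : ℝ) = (((n+1).choose k * (n + 1 - k) : ℕ) : ℝ) :=
      congrArg (Nat.cast (R := ℝ)) (Nat.choose_mul_succ_eq n k)
    push_cast [Nat.cast_sub h] at hc
    linarith
  · rw [Nat.choose_eq_zero_of_lt (by omega), Nat.choose_eq_zero_of_lt (by omega)]
    ring

lemma LC_rec (m n k : ℕ) :
    LC m (n+2) (k+1)
      = LC m (n+1) (k+1) + 2*((m:ℝ)+(n:ℝ)+1-2*(k:ℝ))*LC m (n+1) k - 2*((n:ℝ)+1)*LC m n k := by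
  have hpas : (((n+2).choose (k+1)) : ℝ)
      = ((n+1).choose (k+1) : ℝ) + ((n+1).choose k : ℝ) := by
    rw [Nat.choose_succ_succ (n+1) k]
    push_cast
    ring
  have h2 := choose_succ_real m k
  have h3 := choose_shift_real (n+1) k   -- (n+2) C(n+1,k) = (n+2-k) C(n+2,k)?? no
  -- we need (n+1) C(n,k) = (n+1-k) C(n+1,k):
  have h4 := choose_shift_real n k
  have hfac : ((k+1).factorial : ℝ) = ((k:ℝ)+1) * (k.factorial : ℝ) := by
    rw [Nat.factorial_succ]; push_cast; ring
  simp only [LC, hpas, hfac]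
  -- goal: 2^{k+1} (k+1) k! C(m,k+1) (C(n+1,k+1)+C(n+1,k))
  --   = 2^{k+1} (k+1) k! C(m,k+1) C(n+1,k+1) + 2(m+n+1-2k) 2^k k! C(m,k) C(n+1,k)
  --     - 2(n+1) 2^k k! C(m,k) C(n,k)
  have hexp : (2:ℝ)^(k+1) = 2 * 2^k := by ring
  rw [hexp]
  linear_combination (2 * 2^k * (k.factorial : ℝ) * ((n+1).choose k : ℝ)) * h2
    + (2 * 2^k * (k.factorial : ℝ) * (m.choose k : ℝ)) * h4

lemma LC_zero (m n : ℕ) : LC m n 0 = 1 := by simp [LC]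

lemma LC_big_m {m n k : ℕ} (h : m < k) : LC m n k = 0 := by
  simp [LC, Nat.choose_eq_zero_of_lt h]

lemma LC_big_n {m n k : ℕ} (h : n < k) : LC m n k = 0 := by
  simp [LC, Nat.choose_eq_zero_of_lt h]

lemma hkey_mulX (m n k : ℕ) (x : ℝ) (hk : k ≤ n+1) :
    LC m (n+1) k * (2*x*Herm (m+(n+1)-2*k) x)
      = LC m (n+1) k * Herm (m+(n+2)-2*k) x
        + (2*((m:ℝ)+(n:ℝ)+1-2*(k:ℝ)) * LC m (n+1) k) * Herm (m+n-2*k) x := by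
  rcases le_or_gt (2*k) (m+n+1) with h | h
  · have hm := Herm_mulX (m+(n+1)-2*k) x
    rw [show m+(n+1)-2*k+1 = m+(n+2)-2*k from by omega,
        show m+(n+1)-2*k-1 = m+n-2*k from by omega,
        Nat.cast_sub (by omega : 2*k ≤ m+(n+1))] at hm
    push_cast at hm
    calc LC m (n+1) k * (2*x*Herm (m+(n+1)-2*k) x)
        = LC m (n+1) k * (Herm (m+(n+2)-2*k) x
            + 2*((m:ℝ)+((n:ℝ)+1)-2*(k:ℝ))*Herm (m+n-2*k) x) := by rw [hm]
      _ = _ := by ring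
  · have hm : m < k := by omega
    simp [LC_big_m hm]

lemma lin' : ∀ (n m : ℕ) (x : ℝ),
    Herm m x * Herm n x = ∑ k ∈ Finset.range (n+1), LC m n k * Herm (m+n-2*k) x
  | 0, m, x => by
      simp [Herm_zero, LC]
  | 1, m, x => by
      rw [Herm_one, Finset.sum_range_succ, Finset.sum_range_one, LC_zero,
        show LC m 1 1 = 2*(m:ℝ) from by simp [LC, Nat.choose_one_right],
        show m+1-2*1 = m-1 from by omega, show m+1-2*0 = m+1 from by omega]
      have h := Herm_mulX m x
      linear_combination h
  | (n+2), m, x => by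
      have IH1 := lin' (n+1) m x
      have IH2 := lin' n m x
      rw [Herm_rec n x]
      have step1 : Herm m x * (2*x*Herm (n+1) x - 2*((n:ℝ)+1)*Herm n x)
          = (∑ k ∈ Finset.range (n+2), LC m (n+1) k * (2*x*Herm (m+(n+1)-2*k) x))
            - ∑ k ∈ Finset.range (n+1), (2*((n:ℝ)+1)*LC m n k) * Herm (m+n-2*k) x := by
        have e1 : Herm m x * (2*x*Herm (n+1) x - 2*((n:ℝ)+1)*Herm n x)
            = 2*x*(Herm m x * Herm (n+1) x) - 2*((n:ℝ)+1)*(Herm m x * Herm n x) := by ring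
        rw [e1, IH1, IH2, Finset.mul_sum, Finset.mul_sum]
        congr 1
        · exact Finset.sum_congr rfl (fun k _ => by ring)
        · exact Finset.sum_congr rfl (fun k _ => by ring)
      rw [step1]
      rw [Finset.sum_congr rfl (fun k hk =>
        hkey_mulX m n k x (by simpa using Nat.lt_succ_iff.mp (Finset.mem_range.mp hk))),
        Finset.sum_add_distrib]
      -- Now: (S1 + S2) - S3 = T
      -- S3: extend to range (n+2)
      have hS3 : ∑ k ∈ Finset.range (n+1), (2*((n:ℝ)+1)*LC m n k) * Herm (m+n-2*k) x
          = ∑ k ∈ Finset.range (n+2), (2*((n:ℝ)+1)*LC m n k) * Herm (m+n-2*k) x := by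
        symm
        rw [Finset.sum_range_succ, LC_big_n (by omega : n < n+1)]
        ring
      rw [hS3]
      -- T via sum_range_succ'
      have hT := Finset.sum_range_succ' (fun k => LC m (n+2) k * Herm (m+(n+2)-2*k) x) (n+2)
      rw [show n+2+1 = n+3 from rfl] at hT
      rw [hT]
      -- S1 via sum_range_succ' : extend first
      have hS1ext : ∑ k ∈ Finset.range (n+2), LC m (n+1) k * Herm (m+(n+2)-2*k) x
          = ∑ k ∈ Finset.range (n+3), LC m (n+1) k * Herm (m+(n+2)-2*k) x := by
        symm
        rw [Finset.sum_range_succ, LC_big_n (by omega : n+1 < n+2)]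
        ring
      have hS1 := Finset.sum_range_succ' (fun k => LC m (n+1) k * Herm (m+(n+2)-2*k) x) (n+2)
      rw [show n+2+1 = n+3 from rfl] at hS1
      rw [hS1ext, hS1]
      -- index rewrites inside sums: m+(n+2)-2*(k+1) = m+n-2*k
      have hidx : ∀ k : ℕ, m+(n+2)-2*(k+1) = m+n-2*k := fun k => by omega
      simp only [hidx, Nat.mul_zero, Nat.sub_zero]
      have hrec : ∑ k ∈ Finset.range (n+2), LC m (n+2) (k+1) * Herm (m+n-2*k) x
          = ∑ k ∈ Finset.range (n+2),
              (LC m (n+1) (k+1) * Herm (m+n-2*k) x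
                + (2*((m:ℝ)+(n:ℝ)+1-2*(k:ℝ))*LC m (n+1) k) * Herm (m+n-2*k) x
                - (2*((n:ℝ)+1)*LC m n k) * Herm (m+n-2*k) x) :=
        Finset.sum_congr rfl (fun k _ => by rw [LC_rec m n k]; ring)
      rw [hrec, Finset.sum_sub_distrib, Finset.sum_add_distrib, LC_zero, LC_zero]
      ring


lemma lin (m n : ℕ) (x : ℝ) :
    Herm m x * Herm n x
      = ∑ k ∈ Finset.range (min m n + 1), LC m n k * Herm (m+n-2*k) x := by
  rw [lin' n m x]
  refine (Finset.sum_subset (Finset.range_subset_range.mpr (by omega : min m n + 1 ≤ n+1))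
    (fun k hk hk2 => ?_)).symm
  simp only [Finset.mem_range] at hk hk2
  rcases le_or_gt m n with h | h
  · rw [LC_big_m (by omega : m < k)]
    ring
  · omega

lemma hyp_vanish (N : ℕ) (sr : ℝ) (j : ℕ) (hj : N < 2*j) :
    poch (-(N:ℝ)/2) j * poch ((1-(N:ℝ))/2) j = 0 := by
  have hd := poch_dup (-(N:ℝ)/2) j
  rw [show 2*(-(N:ℝ)/2) = -(N:ℝ) from by ring, poch_neg_nat_zero N (2*j) hj] at hd
  have h4 : (4:ℝ)^j ≠ 0 := by positivity
  rw [show (1-(N:ℝ))/2 = -(N:ℝ)/2 + 1/2 from by ring]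
  rcases mul_eq_zero.mp hd with h | h
  · exact h
  · exact absurd h h4

lemma integrand_expand (N s : ℕ) (β : ℝ) (x : ℝ) :
    x^s * Real.exp (-β*x^2) * Herm N x
      = ∑ i ∈ Finset.range (N/2+1),
          ((-1:ℝ)^i * (N.factorial : ℝ) / ((i.factorial : ℝ) * ((N-2*i).factorial : ℝ))
            * 2^(N-2*i)) * (x^(s+(N-2*i)) * Real.exp (-β*x^2)) := by
  rw [Herm, Finset.mul_sum]
  refine Finset.sum_congr rfl (fun i _ => ?_)
  rw [mul_pow, pow_add]
  ring

lemma integrable_xs_herm {β : ℝ} (hβ : 0 < β) (N s : ℕ) :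
    Integrable (fun x : ℝ => x^s * Real.exp (-β*x^2) * Herm N x) := by
  have : (fun x : ℝ => x^s * Real.exp (-β*x^2) * Herm N x)
      = fun x => ∑ i ∈ Finset.range (N/2+1),
          ((-1:ℝ)^i * (N.factorial : ℝ) / ((i.factorial : ℝ) * ((N-2*i).factorial : ℝ))
            * 2^(N-2*i)) * (x^(s+(N-2*i)) * Real.exp (-β*x^2)) := by
    funext x
    exact integrand_expand N s β x
  rw [this]
  apply integrable_finset_sum
  intro i _
  exact (integrable_pow_gauss hβ (s+(N-2*i))).const_mul _

lemma herm_moment_sum {β : ℝ} (hβ : 0 < β) (N s : ℕ) :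
    ∫ x : ℝ, x^s * Real.exp (-β*x^2) * Herm N x
      = ∑ i ∈ Finset.range (N/2+1),
          ((-1:ℝ)^i * (N.factorial : ℝ) / ((i.factorial : ℝ) * ((N-2*i).factorial : ℝ))
            * 2^(N-2*i)) * ∫ x : ℝ, x^(s+(N-2*i)) * Real.exp (-β*x^2) := by
  have h1 : ∫ x : ℝ, x^s * Real.exp (-β*x^2) * Herm N x
      = ∫ x : ℝ, ∑ i ∈ Finset.range (N/2+1),
          ((-1:ℝ)^i * (N.factorial : ℝ) / ((i.factorial : ℝ) * ((N-2*i).factorial : ℝ))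
            * 2^(N-2*i)) * (x^(s+(N-2*i)) * Real.exp (-β*x^2)) := by
    congr 1
    funext x
    exact integrand_expand N s β x
  rw [h1, integral_finset_sum _ (fun i _ => (integrable_pow_gauss hβ (s+(N-2*i))).const_mul _)]
  exact Finset.sum_congr rfl (fun i _ => integral_const_mul _ _)

lemma key_odd {β : ℝ} (hβ : 0 < β) (N s : ℕ) (h : ¬ Even (N+s)) :
    ∫ x : ℝ, x^s * Real.exp (-β*x^2) * Herm N x = 0 := by
  rw [herm_moment_sum hβ N s]
  apply Finset.sum_eq_zero
  intro i hi
  simp only [Finset.mem_range] at hi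
  rw [Nat.even_iff] at h
  obtain ⟨q, hq⟩ : ∃ q, s+(N-2*i) = 2*q+1 := ⟨(s+(N-2*i))/2, by omega⟩
  rw [hq, integral_odd_moment hβ q, mul_zero]

lemma key_even {β : ℝ} (hβ : 0 < β) (N s : ℕ) (h : Even (N+s)) :
    ∫ x : ℝ, x^s * Real.exp (-β*x^2) * Herm N x
      = 2^N * β ^ (-((N:ℝ)+(s:ℝ)+1)/2) * Real.Gamma (((N:ℝ)+(s:ℝ)+1)/2)
          * hypSum (-(N:ℝ)/2) ((1-(N:ℝ))/2) ((1-(N:ℝ)-(s:ℝ))/2) β := by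
  rw [herm_moment_sum hβ N s]
  have hfin : hypSum (-(N:ℝ)/2) ((1-(N:ℝ))/2) ((1-(N:ℝ)-(s:ℝ))/2) β
      = ∑ j ∈ Finset.range (N/2+1),
          poch (-(N:ℝ)/2) j * poch ((1-(N:ℝ))/2) j
            / (poch ((1-(N:ℝ)-(s:ℝ))/2) j * (j.factorial : ℝ)) * β ^ j := by
    rw [hypSum]
    apply tsum_eq_sum
    intro j hj
    simp only [Finset.mem_range] at hj
    rw [hyp_vanish N 0 j (by omega)]
    simp
  rw [hfin, Finset.mul_sum]
  refine Finset.sum_congr rfl (fun t ht => ?_)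
  simp only [Finset.mem_range] at ht
  have h2t : 2*t ≤ N := by omega
  have h2tr : 2*(t:ℝ) ≤ (N:ℝ) := by exact_mod_cast h2t
  rw [Nat.even_iff] at h
  obtain ⟨q, hq⟩ : ∃ q, s+(N-2*t) = 2*q := ⟨(s+(N-2*t))/2, by omega⟩
  rw [hq, integral_even_moment hβ q]
  have hqr := congrArg (Nat.cast (R:=ℝ)) hq
  push_cast [Nat.cast_sub h2t] at hqr
  set y : ℝ := ((N:ℝ)+(s:ℝ)+1)/2 - t with hy_def
  have hy : 0 < y := by
    have hs0 : (0:ℝ) ≤ (s:ℝ) := by positivity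
    rw [hy_def]; linarith
  have hGam : Real.Gamma (((N:ℝ)+(s:ℝ)+1)/2) = poch y t * Real.Gamma y := by
    rw [← Gamma_shift y hy t]
    congr 1
    rw [hy_def]; ring
  have hGq : Real.Gamma ((2*(q:ℝ)+1)/2) = Real.Gamma y := by
    congr 1
    rw [hy_def]; linarith
  have hpoch_c : poch ((1-(N:ℝ)-(s:ℝ))/2) t = (-1)^t * poch y t := by
    rw [poch_reflect ((1-(N:ℝ)-(s:ℝ))/2) t,
      show -((1-(N:ℝ)-(s:ℝ))/2) - (t:ℝ) + 1 = y from by rw [hy_def]; ring]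
  have hneg : poch (-(N:ℝ)) (2*t) = (N.factorial:ℝ) / (((N-2*t).factorial : ℕ) : ℝ) := by
    rw [poch_neg_nat N (2*t) h2t]
    simp [pow_mul]
  have hP12 : poch (-(N:ℝ)/2) t * poch ((1-(N:ℝ))/2) t
      = (N.factorial:ℝ)/(((N-2*t).factorial : ℕ):ℝ) / 4^t := by
    have hd := poch_dup (-(N:ℝ)/2) t
    rw [show (-(N:ℝ)/2 + 1/2) = (1-(N:ℝ))/2 from by ring,
        show 2*(-(N:ℝ)/2) = -(N:ℝ) from by ring, hneg] at hd
    have h4 : (4:ℝ)^t ≠ 0 := by positivity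
    rw [div_div, eq_div_iff (by positivity : (((N-2*t).factorial : ℕ):ℝ) * 4^t ≠ 0)]
    have hFne : (((N-2*t).factorial : ℕ):ℝ) ≠ 0 := by positivity
    have hd2 : poch (-(N:ℝ)/2) t * poch ((1-(N:ℝ))/2) t * 4^t * (((N-2*t).factorial : ℕ):ℝ)
        = (N.factorial:ℝ) := by
      rw [hd, div_mul_cancel₀ _ hFne]
    linear_combination hd2
  have hβpow : β ^ (-(2*(q:ℝ)+1)/2) = β ^ (-((N:ℝ)+(s:ℝ)+1)/2) * β ^ t := by
    rw [← Real.rpow_natCast β t, ← Real.rpow_add hβ]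
    congr 1
    linarith
  have h2pow : (2:ℝ)^(N-2*t) * 4^t = 2^N := by
    rw [show (4:ℝ) = 2^2 from by norm_num, ← pow_mul, ← pow_add]
    congr 1
    omega
  have hsign : ((-1:ℝ))^t * (-1)^t = 1 := by
    rw [← pow_add]
    exact Even.neg_one_pow ⟨t, rfl⟩
  rw [hGq, hβpow, hGam, hpoch_c, hP12]
  set B : ℝ := β ^ (-((N:ℝ)+(s:ℝ)+1)/2) with hB
  have hsign2 : ((-1:ℝ))^(t*2) = 1 := Even.neg_one_pow ⟨t, by ring⟩
  have hfac1 : ((t.factorial : ℕ):ℝ) ≠ 0 := by positivity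
  have hfac2 : (((N-2*t).factorial : ℕ):ℝ) ≠ 0 := by positivity
  have hpy : poch y t ≠ 0 := (poch_pos hy t).ne'
  have h4 : (4:ℝ)^t ≠ 0 := by positivity
  field_simp
  linear_combination
    (B * ((2:ℝ)^(N-2*t) * 4^t)) * hsign2
    + B * h2pow

lemma main_even {β : ℝ} (hβ : 0 < β) (m n s : ℕ) (h : Even (m + n + s)) :
    ∫ x : ℝ, x ^ s * Real.exp (-β * x ^ 2) * Herm m x * Herm n x =
      (2 : ℝ) ^ (m + n) * β ^ (-(((m : ℝ) + (n : ℝ) + (s : ℝ)) + 1) / 2) *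
        ∑ k ∈ Finset.range (min m n + 1),
          (m.choose k : ℝ) * (n.choose k : ℝ) * (k.factorial : ℝ) * (β / 2) ^ k *
            Real.Gamma (1 / 2 - (k : ℝ) + ((m : ℝ) + (n : ℝ) + (s : ℝ)) / 2) *
            hypSum ((k : ℝ) - ((m : ℝ) + (n : ℝ)) / 2)
              (1 / 2 + (k : ℝ) - ((m : ℝ) + (n : ℝ)) / 2)
              (1 / 2 + (k : ℝ) - ((m : ℝ) + (n : ℝ) + (s : ℝ)) / 2) β := by
  have hpt : (fun x : ℝ => x ^ s * Real.exp (-β * x ^ 2) * Herm m x * Herm n x)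
      = fun x : ℝ => ∑ k ∈ Finset.range (min m n + 1),
          LC m n k * (x ^ s * Real.exp (-β * x ^ 2) * Herm (m+n-2*k) x) := by
    funext x
    rw [mul_assoc, lin m n x, Finset.mul_sum]
    exact Finset.sum_congr rfl (fun k _ => by ring)
  rw [hpt]
  have hswap : ∫ x : ℝ, ∑ k ∈ Finset.range (min m n + 1),
        LC m n k * (x ^ s * Real.exp (-β * x ^ 2) * Herm (m+n-2*k) x)
      = ∑ k ∈ Finset.range (min m n + 1),
          ∫ x : ℝ, LC m n k * (x ^ s * Real.exp (-β * x ^ 2) * Herm (m+n-2*k) x) :=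
    integral_finset_sum _ (fun k _ => (integrable_xs_herm hβ (m+n-2*k) s).const_mul _)
  rw [hswap]
  rw [Finset.mul_sum]
  refine Finset.sum_congr rfl (fun k hk => ?_)
  simp only [Finset.mem_range] at hk
  have hkm : k ≤ m := by omega
  have hkn : k ≤ n := by omega
  have h2k : 2*k ≤ m+n := by omega
  rw [integral_const_mul, key_even hβ (m+n-2*k) s (by
    rw [Nat.even_iff] at h ⊢
    omega)]
  have hcast : ((m+n-2*k : ℕ):ℝ) = (m:ℝ)+(n:ℝ)-2*(k:ℝ) := by
    push_cast [Nat.cast_sub h2k]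
    ring
  have e1 : hypSum (-((m+n-2*k : ℕ):ℝ)/2) ((1-((m+n-2*k : ℕ):ℝ))/2)
        ((1-((m+n-2*k : ℕ):ℝ)-(s:ℝ))/2) β
      = hypSum ((k : ℝ) - ((m : ℝ) + (n : ℝ)) / 2)
          (1 / 2 + (k : ℝ) - ((m : ℝ) + (n : ℝ)) / 2)
          (1 / 2 + (k : ℝ) - ((m : ℝ) + (n : ℝ) + (s : ℝ)) / 2) β := by
    rw [show -((m+n-2*k : ℕ):ℝ)/2 = (k : ℝ) - ((m : ℝ) + (n : ℝ)) / 2 from by rw [hcast]; ring,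
        show (1-((m+n-2*k : ℕ):ℝ))/2 = 1 / 2 + (k : ℝ) - ((m : ℝ) + (n : ℝ)) / 2 from by
          rw [hcast]; ring,
        show (1-((m+n-2*k : ℕ):ℝ)-(s:ℝ))/2
            = 1 / 2 + (k : ℝ) - ((m : ℝ) + (n : ℝ) + (s : ℝ)) / 2 from by rw [hcast]; ring]
  have e2 : Real.Gamma ((((m+n-2*k : ℕ):ℝ)+(s:ℝ)+1)/2)
      = Real.Gamma (1 / 2 - (k : ℝ) + ((m : ℝ) + (n : ℝ) + (s : ℝ)) / 2) := by
    rw [show (((m+n-2*k : ℕ):ℝ)+(s:ℝ)+1)/2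
        = 1 / 2 - (k : ℝ) + ((m : ℝ) + (n : ℝ) + (s : ℝ)) / 2 from by rw [hcast]; ring]
  have e3 : β ^ (-(((m+n-2*k : ℕ):ℝ)+(s:ℝ)+1)/2)
      = β ^ (-(((m : ℝ) + (n : ℝ) + (s : ℝ)) + 1) / 2) * β ^ k := by
    rw [← Real.rpow_natCast β k, ← Real.rpow_add hβ]
    congr 1
    rw [hcast]
    ring
  rw [e1, e2, e3]
  set Ga := Real.Gamma (1 / 2 - (k : ℝ) + ((m : ℝ) + (n : ℝ) + (s : ℝ)) / 2) with hGa
  set Hy := hypSum ((k : ℝ) - ((m : ℝ) + (n : ℝ)) / 2)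
      (1 / 2 + (k : ℝ) - ((m : ℝ) + (n : ℝ)) / 2)
      (1 / 2 + (k : ℝ) - ((m : ℝ) + (n : ℝ) + (s : ℝ)) / 2) β with hHy
  set B2 := β ^ (-(((m : ℝ) + (n : ℝ) + (s : ℝ)) + 1) / 2) with hB2
  have h2pow : (2:ℝ)^(m+n-2*k) * (2^k * 2^k) = 2^(m+n) := by
    rw [← pow_add, ← pow_add]
    congr 1
    omega
  have hne : (2:ℝ)^k ≠ 0 := by positivity
  rw [div_pow, LC]
  field_simp
  linear_combination (Ga * Hy * B2
    * (m.choose k : ℝ) * (n.choose k : ℝ)) * h2pow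

lemma main_odd {β : ℝ} (hβ : 0 < β) (m n s : ℕ) (h : Odd (m + n + s)) :
    ∫ x : ℝ, x ^ s * Real.exp (-β * x ^ 2) * Herm m x * Herm n x = 0 := by
  have hpt : (fun x : ℝ => x ^ s * Real.exp (-β * x ^ 2) * Herm m x * Herm n x)
      = fun x : ℝ => ∑ k ∈ Finset.range (min m n + 1),
          LC m n k * (x ^ s * Real.exp (-β * x ^ 2) * Herm (m+n-2*k) x) := by
    funext x
    rw [mul_assoc, lin m n x, Finset.mul_sum]
    exact Finset.sum_congr rfl (fun k _ => by ring)
  rw [hpt]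
  have hswap : ∫ x : ℝ, ∑ k ∈ Finset.range (min m n + 1),
        LC m n k * (x ^ s * Real.exp (-β * x ^ 2) * Herm (m+n-2*k) x)
      = ∑ k ∈ Finset.range (min m n + 1),
          ∫ x : ℝ, LC m n k * (x ^ s * Real.exp (-β * x ^ 2) * Herm (m+n-2*k) x) :=
    integral_finset_sum _ (fun k _ => (integrable_xs_herm hβ (m+n-2*k) s).const_mul _)
  rw [hswap]
  apply Finset.sum_eq_zero
  intro k hk
  simp only [Finset.mem_range] at hk
  rw [integral_const_mul, key_odd hβ (m+n-2*k) s (by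
    rw [Nat.odd_iff] at h
    rw [Nat.even_iff]
    omega), mul_zero]

end HermiteKreinAux

/-- Krein-like 2-functional of Hermite polynomials (algebraic approach). -/
theorem hermite_krein_2_functional_algebraic (m n s : ℕ) (β : ℝ) (hβ : 0 < β) :
    (Even (m + n + s) →
      ∫ x : ℝ, x ^ s * Real.exp (-β * x ^ 2) * Herm m x * Herm n x =
        (2 : ℝ) ^ (m + n) * β ^ (-(((m : ℝ) + (n : ℝ) + (s : ℝ)) + 1) / 2) *
          ∑ k ∈ Finset.range (min m n + 1),
            (m.choose k : ℝ) * (n.choose k : ℝ) * (k.factorial : ℝ) * (β / 2) ^ k *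
              Real.Gamma (1 / 2 - (k : ℝ) + ((m : ℝ) + (n : ℝ) + (s : ℝ)) / 2) *
              hypSum ((k : ℝ) - ((m : ℝ) + (n : ℝ)) / 2)
                (1 / 2 + (k : ℝ) - ((m : ℝ) + (n : ℝ)) / 2)
                (1 / 2 + (k : ℝ) - ((m : ℝ) + (n : ℝ) + (s : ℝ)) / 2) β) ∧
    (Odd (m + n + s) →
      ∫ x : ℝ, x ^ s * Real.exp (-β * x ^ 2) * Herm m x * Herm n x = 0) := by
  constructor
  · intro h
    exact main_even hβ m n s h
  · intro h
    exact main_odd hβ m n s h
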